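/- One-step descent under ES: if f is L-smooth, x' = x − η g where E[g] = ∇f(x) and E‖g‖² ≤ 2A(f(x) − f⋆) + B‖∇f(x)‖² + C, then E[f(x')] ≤ f(x) − η(1 − LBη/2)‖∇f(x)‖² + LAη²(f(x) − f⋆) + (Lη²/2)C. -/

import Mathlib

open MeasureTheory ProbabilityTheory

lemma descent_lemma {d : ℕ} (f : EuclideanSpace ℝ (Fin d) → ℝ) (L : ℝ) (hL : 0 ≤ L)
    (hdiff : ∀ y, DifferentiableAt ℝ f y)
    (hlip : ∀ y z, ‖gradient f y - gradient f z‖ ≤ L * ‖y - z‖)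
    (x y : EuclideanSpace ℝ (Fin d)) :
    f y ≤ f x + inner ℝ (gradient f x) (y - x) + L / 2 * ‖y - x‖ ^ 2 := by
  set v := y - x with hv
  set φ : ℝ → ℝ := fun t =>
    f (x + t • v) - t * inner ℝ (gradient f x) v - L * t ^ 2 / 2 * ‖v‖ ^ 2 with hφ
  have hderiv : ∀ t : ℝ, HasDerivAt φ
      ((inner ℝ (gradient f (x + t • v)) v : ℝ) - inner ℝ (gradient f x) v - L * t * ‖v‖ ^ 2) t := by
    intro t
    have hc : HasDerivAt (fun t : ℝ => x + t • v) v t := by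
      simpa using ((hasDerivAt_id t).smul_const v).const_add x
    have hf : HasFDerivAt f (InnerProductSpace.toDual ℝ _ (gradient f (x + t • v)))
        (x + t • v) := (hdiff _).hasGradientAt.hasFDerivAt
    have h1 : HasDerivAt (fun t : ℝ => f (x + t • v))
        ((inner ℝ (gradient f (x + t • v)) v : ℝ)) t := by
      have h := hf.comp_hasDerivAt t hc
      rw [InnerProductSpace.toDual_apply_apply] at h
      exact h
    have h2 : HasDerivAt (fun t : ℝ => t * (inner ℝ (gradient f x) v : ℝ))
        (inner ℝ (gradient f x) v) t := by
      simpa using (hasDerivAt_id t).mul_const (inner ℝ (gradient f x) v : ℝ)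
    have h3 : HasDerivAt (fun t : ℝ => L * t ^ 2 / 2 * ‖v‖ ^ 2) (L * t * ‖v‖ ^ 2) t := by
      have := ((hasDerivAt_pow 2 t).const_mul L).div_const 2
      have := this.mul_const (‖v‖ ^ 2)
      refine this.congr_deriv ?_
      ring
    exact (h1.sub h2).sub h3
  have hmono : AntitoneOn φ (Set.Ici (0 : ℝ)) := by
    apply antitoneOn_of_deriv_nonpos (convex_Ici 0)
    · exact Continuous.continuousOn (by
        exact continuous_iff_continuousAt.2 fun t => (hderiv t).continuousAt)
    · intro t ht
      exact (hderiv t).differentiableAt.differentiableWithinAt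
    · intro t ht
      rw [interior_Ici] at ht
      rw [(hderiv t).deriv]
      have h4 : (inner ℝ (gradient f (x + t • v)) v : ℝ) - inner ℝ (gradient f x) v ≤
          L * t * ‖v‖ ^ 2 := by
        have := real_inner_le_norm (gradient f (x + t • v) - gradient f x) v
        rw [inner_sub_left] at this
        have h5 := hlip (x + t • v) x
        simp only [add_sub_cancel_left] at h5
        have h6 : ‖t • v‖ = t * ‖v‖ := by
          rw [norm_smul, Real.norm_eq_abs, abs_of_pos ht.out]
        rw [h6] at h5
        nlinarith [mul_le_mul_of_nonneg_right h5 (norm_nonneg v), this]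
      linarith
  have := hmono (Set.self_mem_Ici) (Set.mem_Ici.2 zero_le_one) zero_le_one
  simp only [hφ, zero_smul, add_zero, one_smul, zero_mul, one_pow, mul_one] at this
  have hy : x + v = y := by simp [hv]
  rw [hy] at this
  nlinarith [this]

theorem one_step_descent_under_es {Ω : Type*} [MeasureSpace Ω]
    [IsProbabilityMeasure (ℙ : Measure Ω)] {d : ℕ}
    (f : EuclideanSpace ℝ (Fin d) → ℝ) (L fstar : ℝ) (hL : 0 < L)
    (hdiff : ∀ y, DifferentiableAt ℝ f y)
    (hlip : ∀ y z, ‖gradient f y - gradient f z‖ ≤ L * ‖y - z‖)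
    (hbound : ∀ y, fstar ≤ f y)
    (η : ℝ) (hη : 0 < η)
    (A B C : ℝ) (hA : 0 ≤ A) (hB : 0 ≤ B) (hC : 0 ≤ C)
    (x : EuclideanSpace ℝ (Fin d))
    (g : Ω → EuclideanSpace ℝ (Fin d)) (hg2 : MemLp g 2 ℙ)
    (hunbiased : ∫ ω, g ω = gradient f x)
    (hES : ∫ ω, ‖g ω‖ ^ 2 ≤ 2 * A * (f x - fstar) + B * ‖gradient f x‖ ^ 2 + C) :
    ∫ ω, f (x - η • g ω) ≤
      f x - η * (1 - L * B * η / 2) * ‖gradient f x‖ ^ 2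
        + L * A * η ^ 2 * (f x - fstar) + (L * η ^ 2 / 2) * C := by
  set G := gradient f x with hG
  -- integrability facts
  have hgint : Integrable g ℙ := hg2.integrable one_le_two
  have hgsq : Integrable (fun ω => ‖g ω‖ ^ 2) ℙ := by
    have := hg2.integrable_norm_rpow (by norm_num) (by norm_num)
    simpa [Real.rpow_natCast] using this.congr (Filter.Eventually.of_forall fun ω => by
      norm_num [Real.rpow_natCast])
  have hinner : Integrable (fun ω => (inner ℝ G (g ω) : ℝ)) ℙ := by
    exact hgint.inner_const G |>.congr (Filter.Eventually.of_forall fun ω => real_inner_comm _ _)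
  -- upper bound function
  set h : Ω → ℝ := fun ω => f x - η * inner ℝ G (g ω) + L * η ^ 2 / 2 * ‖g ω‖ ^ 2 with hh
  have hsub : Integrable (fun ω => f x - η * inner ℝ G (g ω)) ℙ := by
    exact (integrable_const (f x)).sub (hinner.const_mul η)
  have hsq2 : Integrable (fun ω => L * η ^ 2 / 2 * ‖g ω‖ ^ 2) ℙ := hgsq.const_mul _
  have hhint : Integrable h ℙ := hsub.add hsq2
  have hptwise : ∀ ω, f (x - η • g ω) ≤ h ω := by
    intro ω
    have := descent_lemma f L hL.le hdiff hlip x (x - η • g ω)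
    have hsub : x - η • g ω - x = -(η • g ω) := by abel
    rw [hsub] at this
    simp only [inner_neg_right, inner_smul_right, norm_neg, norm_smul,
      Real.norm_eq_abs, abs_of_pos hη] at this
    calc f (x - η • g ω) ≤ f x + -(η * inner ℝ G (g ω)) + L / 2 * (η * ‖g ω‖) ^ 2 := this
      _ = h ω := by simp [hh]; ring
  -- measurability & integrability of LHS
  have hfc : Continuous f := continuous_iff_continuousAt.2 fun y => (hdiff y).continuousAt
  have hmeas : AEStronglyMeasurable (fun ω => f (x - η • g ω)) ℙ := by
    exact hfc.comp_aestronglyMeasurable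
      ((aestronglyMeasurable_const.sub (hg2.aestronglyMeasurable.const_smul η)))
  have hFint : Integrable (fun ω => f (x - η • g ω)) ℙ := by
    refine Integrable.mono' (hhint.abs.add (integrable_const |fstar|)) hmeas
      (Filter.Eventually.of_forall fun ω => ?_)
    simp only [Pi.add_apply]
    rw [Real.norm_eq_abs, abs_le]
    constructor
    · have := hbound (x - η • g ω)
      have : -( |h ω| + |fstar|) ≤ fstar := by
        have := abs_nonneg (h ω)
        have := neg_abs_le fstar
        linarith
      linarith [hbound (x - η • g ω)]
    · have := hptwise ω
      have := le_abs_self (h ω)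
      have := abs_nonneg fstar
      linarith
  -- integrate
  have hle : ∫ ω, f (x - η • g ω) ≤ ∫ ω, h ω := by
    exact integral_mono hFint hhint hptwise
  have hint_h : ∫ ω, h ω = f x - η * ‖G‖ ^ 2 + L * η ^ 2 / 2 * ∫ ω, ‖g ω‖ ^ 2 := by
    rw [hh]
    rw [integral_add hsub hsq2,
      integral_sub (integrable_const (f x)) (hinner.const_mul η),
      integral_const, integral_const_mul, integral_const_mul, integral_inner hgint,
      hunbiased, real_inner_self_eq_norm_sq]
    simp
  rw [hint_h] at hle
  have hmul : L * η ^ 2 / 2 * ∫ ω, ‖g ω‖ ^ 2 ≤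
      L * η ^ 2 / 2 * (2 * A * (f x - fstar) + B * ‖G‖ ^ 2 + C) := by
    apply mul_le_mul_of_nonneg_left hES (by positivity)
  calc ∫ ω, f (x - η • g ω) ≤ f x - η * ‖G‖ ^ 2 + L * η ^ 2 / 2 *
        (2 * A * (f x - fstar) + B * ‖G‖ ^ 2 + C) := by linarith
    _ = f x - η * (1 - L * B * η / 2) * ‖G‖ ^ 2 + L * A * η ^ 2 * (f x - fstar)
        + (L * η ^ 2 / 2) * C := by ring
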